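/- Let n ≥ 3 and let 𝒰⁺_{q,n} be the ℂ(q)-algebra presented by generators u_1,…,u_{n−1}, w, z and relations: [u_i,[u_i,u_j]_q]_{q^{−1}}=0 if |i−j|=1; u_iu_j=u_ju_i if |i−j|>1; u_iw=wu_i for i≠1; u_iz=zu_i for i≠2; zw=wz; [u_1,[u_1,[u_1,w]]_{q²}]_{q^{−2}}=0; [u_2,[u_2,z]_q]_{q^{−1}}=0; [w,[w,u_1]_{q²}]_{q^{−2}}=−h·wz; [z,[u_2,[u_1,w]_{q²}]_q]_q=[w,[u_1,[u_2,z]_q]_q]_{q²}; and 2[z,[z,u_2]_q]_{q^{−1}}=h(z[u_1,u_2]_q w + w[u_2,u_1]_{q^{−1}} z + wu_1[z,u_2]_q + [u_2,z]_{q^{−1}}u_1w), where h=q−q^{−1}. Let U_q^+(sp_{2n}) be the ℂ(q)-algebra presented by generators E_0,E_1,…,E_{n−1} and relations: E_iE_j=E_jE_i for |i−j|≥2; E_i²E_j−(q+q^{−1})E_iE_jE_i+E_jE_i²=0 for 1≤i,j≤n−1 with |i−j|=1; E_0²E_1−(q²+q^{−2})E_0E_1E_0+E_1E_0²=0; and E_1³E_0−(q²+1+q^{−2})E_1²E_0E_1+(q²+1+q^{−2})E_1E_0E_1²−E_0E_1³=0.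 Then the assignment u_i ↦ E_i (1≤i≤n−1), w ↦ E_0, z ↦ 0 extends to a surjective ℂ(q)-algebra homomorphism μ : 𝒰⁺_{q,n} → U_q^+(sp_{2n}). -/

import Mathlib

noncomputable section

/-- The field `ℂ(q)` of rational functions. -/
abbrev Kq := RatFunc ℂ
/-- The variable `q`. -/
def qq : Kq := RatFunc.X

/-- The deformed commutator `[a,b]_v = ab − v·ba` in any `ℂ(q)`-algebra. -/
def cmt {A : Type*} [Ring A] [Algebra Kq A] (a b : A) (v : Kq) : A := a * b - v • (b * a)

/-- Generators `u_1, …, u_{n−1}, w, z` of `𝒰⁺_{q,n}`; `u i` stands for `u_{i+1}`. -/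
inductive UGen (n : ℕ)
  | u (i : Fin (n - 1))
  | w
  | z

variable (n : ℕ)

/-- The generator `u_{i+1}` in the free algebra. -/
def fu (i : Fin (n - 1)) : FreeAlgebra Kq (UGen n) := FreeAlgebra.ι Kq (UGen.u i)
/-- The generator `w` in the free algebra. -/
def fw : FreeAlgebra Kq (UGen n) := FreeAlgebra.ι Kq UGen.w
/-- The generator `z` in the free algebra. -/
def fz : FreeAlgebra Kq (UGen n) := FreeAlgebra.ι Kq UGen.z

/-- The defining relations of the algebra `𝒰⁺_{q,n}` (the uberalgebra of the quantum folding
`(so_{2n+2}, sp_{2n})`), in the generators `u_1,…,u_{n−1}, w, z`.  Here the generator `u i`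
represents `u_{i+1}` and `[a,b]_v = ab − v·ba`. -/
inductive URel : FreeAlgebra Kq (UGen n) → FreeAlgebra Kq (UGen n) → Prop
  | serre_u (i j : Fin (n - 1)) :
      (i : ℕ) + 1 = (j : ℕ) ∨ (j : ℕ) + 1 = (i : ℕ) →
      URel (cmt (fu n i) (cmt (fu n i) (fu n j) qq) qq⁻¹) 0
  | comm_u (i j : Fin (n - 1)) :
      (i : ℕ) + 1 < (j : ℕ) ∨ (j : ℕ) + 1 < (i : ℕ) →
      URel (fu n i * fu n j) (fu n j * fu n i)
  | comm_uw (i : Fin (n - 1)) : (i : ℕ) ≠ 0 → URel (fu n i * fw n) (fw n * fu n i)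
  | comm_uz (i : Fin (n - 1)) : (i : ℕ) ≠ 1 → URel (fu n i * fz n) (fz n * fu n i)
  | comm_zw : URel (fz n * fw n) (fw n * fz n)
  | serre_u1w (i : Fin (n - 1)) : (i : ℕ) = 0 →
      URel (cmt (fu n i) (cmt (fu n i) (cmt (fu n i) (fw n) 1) (qq ^ 2)) (qq⁻¹ ^ 2)) 0
  | serre_u2z (i : Fin (n - 1)) : (i : ℕ) = 1 →
      URel (cmt (fu n i) (cmt (fu n i) (fz n) qq) qq⁻¹) 0
  | rel_wwu (i : Fin (n - 1)) : (i : ℕ) = 0 →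
      URel (cmt (fw n) (cmt (fw n) (fu n i) (qq ^ 2)) (qq⁻¹ ^ 2))
        (-((qq - qq⁻¹) • (fw n * fz n)))
  | rel_zw (i j : Fin (n - 1)) : (i : ℕ) = 0 → (j : ℕ) = 1 →
      URel (cmt (fz n) (cmt (fu n j) (cmt (fu n i) (fw n) (qq ^ 2)) qq) qq)
        (cmt (fw n) (cmt (fu n i) (cmt (fu n j) (fz n) qq) qq) (qq ^ 2))
  | rel_zz (i j : Fin (n - 1)) : (i : ℕ) = 0 → (j : ℕ) = 1 →
      URel ((2 : Kq) • cmt (fz n) (cmt (fz n) (fu n j) qq) qq⁻¹)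
        ((qq - qq⁻¹) •
          (fz n * cmt (fu n i) (fu n j) qq * fw n
            + fw n * cmt (fu n j) (fu n i) qq⁻¹ * fz n
            + fw n * fu n i * cmt (fz n) (fu n j) qq
            + cmt (fu n j) (fz n) qq⁻¹ * fu n i * fw n))

/-- The algebra `𝒰⁺_{q,n}`. -/
abbrev UqnPlus := RingQuot (URel n)

/-- The generator `E_i` (`0 ≤ i ≤ n−1`) of the free algebra underlying `U_q^+(sp_{2n})`. -/
def fEsp (i : Fin n) : FreeAlgebra Kq (Fin n) := FreeAlgebra.ι Kq i

/-- The defining relations of `U_q^+(sp_{2n})` in the Chevalley generators `E_0, …, E_{n−1}`. -/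
inductive SPRel : FreeAlgebra Kq (Fin n) → FreeAlgebra Kq (Fin n) → Prop
  | comm (i j : Fin n) : (i : ℕ) + 2 ≤ (j : ℕ) ∨ (j : ℕ) + 2 ≤ (i : ℕ) →
      SPRel (fEsp n i * fEsp n j) (fEsp n j * fEsp n i)
  | serre (i j : Fin n) : 1 ≤ (i : ℕ) → 1 ≤ (j : ℕ) →
      (i : ℕ) + 1 = (j : ℕ) ∨ (j : ℕ) + 1 = (i : ℕ) →
      SPRel (fEsp n i * fEsp n i * fEsp n j + fEsp n j * fEsp n i * fEsp n i)
        ((qq + qq⁻¹) • (fEsp n i * fEsp n j * fEsp n i))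
  | serre01 (i j : Fin n) : (i : ℕ) = 0 → (j : ℕ) = 1 →
      SPRel (fEsp n i * fEsp n i * fEsp n j + fEsp n j * fEsp n i * fEsp n i)
        ((qq ^ 2 + qq⁻¹ ^ 2) • (fEsp n i * fEsp n j * fEsp n i))
  | serre10 (i j : Fin n) : (i : ℕ) = 0 → (j : ℕ) = 1 →
      SPRel (fEsp n j * fEsp n j * fEsp n j * fEsp n i
          + (qq ^ 2 + 1 + qq⁻¹ ^ 2) • (fEsp n j * fEsp n i * fEsp n j * fEsp n j))
        ((qq ^ 2 + 1 + qq⁻¹ ^ 2) • (fEsp n j * fEsp n j * fEsp n i * fEsp n j)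
          + fEsp n i * fEsp n j * fEsp n j * fEsp n j)

/-- `U_q^+(sp_{2n})`. -/
abbrev UqSP := RingQuot (SPRel n)

/-- The generator `E_i` of `U_q^+(sp_{2n})`. -/
def mEsp (i : Fin n) : UqSP n := RingQuot.mkAlgHom Kq (SPRel n) (fEsp n i)


/-! ### Auxiliary material for the proof -/

lemma qq_ne_zero : (qq : Kq) ≠ 0 := RatFunc.X_ne_zero

lemma map_cmt {A B : Type*} [Ring A] [Algebra Kq A] [Ring B] [Algebra Kq B]
    (f : A →ₐ[Kq] B) (a b : A) (v : Kq) : f (cmt a b v) = cmt (f a) (f b) v := by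
  simp [cmt]

section helpers
variable {A : Type*} [Ring A] [Algebra Kq A]

lemma cmt3a (a b : A) :
    cmt a (cmt a b qq) qq⁻¹ = a*a*b + b*a*a - (qq+qq⁻¹) • (a*b*a) := by
  have h0 : (qq : Kq) ≠ 0 := qq_ne_zero
  simp only [cmt, mul_sub, sub_mul, smul_sub, mul_smul_comm, smul_mul_assoc, smul_smul,
    inv_mul_cancel₀ h0, one_smul, add_smul, mul_assoc]
  abel

lemma cmt3b (a b : A) :
    cmt a (cmt a b (qq^2)) (qq⁻¹^2) = a*a*b + b*a*a - (qq^2+qq⁻¹^2) • (a*b*a) := by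
  have h0 : (qq : Kq) ^ 2 ≠ 0 := pow_ne_zero _ qq_ne_zero
  simp only [cmt, mul_sub, sub_mul, smul_sub, mul_smul_comm, smul_mul_assoc, smul_smul,
    inv_pow, inv_mul_cancel₀ h0, one_smul, add_smul, mul_assoc]
  abel

lemma cmt4 (a b : A) :
    cmt a (cmt a (cmt a b 1) (qq^2)) (qq⁻¹^2)
      = (a*a*a*b + (qq^2+1+qq⁻¹^2) • (a*b*a*a))
        - ((qq^2+1+qq⁻¹^2) • (a*a*b*a) + b*a*a*a) := by
  have h0 : (qq : Kq) ^ 2 ≠ 0 := pow_ne_zero _ qq_ne_zero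
  simp only [cmt, one_smul, mul_sub, sub_mul, smul_sub, mul_smul_comm, smul_mul_assoc,
    smul_smul, inv_pow, inv_mul_cancel₀ h0, one_smul, add_smul, mul_assoc]
  abel

end helpers

lemma sp_comm (i j : Fin n) (h : (i : ℕ) + 2 ≤ (j : ℕ) ∨ (j : ℕ) + 2 ≤ (i : ℕ)) :
    mEsp n i * mEsp n j = mEsp n j * mEsp n i := by
  have := RingQuot.mkAlgHom_rel Kq (SPRel.comm i j h)
  simpa [mEsp, map_mul] using this

lemma sp_serre (i j : Fin n) (hi : 1 ≤ (i : ℕ)) (hj : 1 ≤ (j : ℕ))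
    (h : (i : ℕ) + 1 = (j : ℕ) ∨ (j : ℕ) + 1 = (i : ℕ)) :
    mEsp n i * mEsp n i * mEsp n j + mEsp n j * mEsp n i * mEsp n i
      = (qq + qq⁻¹) • (mEsp n i * mEsp n j * mEsp n i) := by
  have := RingQuot.mkAlgHom_rel Kq (SPRel.serre i j hi hj h)
  simpa [mEsp, map_mul, map_add, map_smul] using this

lemma sp_serre01 (i j : Fin n) (hi : (i : ℕ) = 0) (hj : (j : ℕ) = 1) :
    mEsp n i * mEsp n i * mEsp n j + mEsp n j * mEsp n i * mEsp n i
      = (qq ^ 2 + qq⁻¹ ^ 2) • (mEsp n i * mEsp n j * mEsp n i) := by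
  have := RingQuot.mkAlgHom_rel Kq (SPRel.serre01 i j hi hj)
  simpa [mEsp, map_mul, map_add, map_smul] using this

lemma sp_serre10 (i j : Fin n) (hi : (i : ℕ) = 0) (hj : (j : ℕ) = 1) :
    mEsp n j * mEsp n j * mEsp n j * mEsp n i
        + (qq ^ 2 + 1 + qq⁻¹ ^ 2) • (mEsp n j * mEsp n i * mEsp n j * mEsp n j)
      = (qq ^ 2 + 1 + qq⁻¹ ^ 2) • (mEsp n j * mEsp n j * mEsp n i * mEsp n j)
        + mEsp n i * mEsp n j * mEsp n j * mEsp n j := by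
  have := RingQuot.mkAlgHom_rel Kq (SPRel.serre10 i j hi hj)
  simpa [mEsp, map_mul, map_add, map_smul] using this

/-- The target of each generator. -/
def Egen (hn : 3 ≤ n) : UGen n → UqSP n
  | .u i => mEsp n ⟨(i : ℕ) + 1, Nat.add_lt_of_lt_sub i.isLt⟩
  | .w => mEsp n ⟨0, Nat.zero_lt_of_lt (show 2 < n from hn)⟩
  | .z => 0

/-- The lift to the free algebra. -/
def gHom (hn : 3 ≤ n) : FreeAlgebra Kq (UGen n) →ₐ[Kq] UqSP n :=
  FreeAlgebra.lift Kq (Egen n hn)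

lemma gHom_u (hn : 3 ≤ n) (i : Fin (n - 1)) :
    gHom n hn (fu n i) = mEsp n ⟨(i : ℕ) + 1, Nat.add_lt_of_lt_sub i.isLt⟩ := by
  simp [gHom, fu, Egen]

lemma gHom_w (hn : 3 ≤ n) : gHom n hn (fw n) = mEsp n ⟨0, Nat.zero_lt_of_lt (show 2 < n from hn)⟩ := by
  simp [gHom, fw, Egen]

lemma gHom_z (hn : 3 ≤ n) : gHom n hn (fz n) = 0 := by
  simp [gHom, fz, Egen]

lemma gHom_rel (hn : 3 ≤ n) : ∀ ⦃a b⦄, URel n a b → gHom n hn a = gHom n hn b := by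
  have h0 : (qq : Kq) ≠ 0 := qq_ne_zero
  intro a b r
  cases r with
  | serre_u i j h =>
      rw [map_cmt, map_cmt, gHom_u, gHom_u, map_zero, cmt3a, sub_eq_zero]
      exact sp_serre n _ _ (by simp) (by simp) (by simp only [Fin.val_mk]; omega)
  | comm_u i j h =>
      rw [map_mul, map_mul, gHom_u, gHom_u]
      exact sp_comm n _ _ (by simp only [Fin.val_mk]; omega)
  | comm_uw i h =>
      rw [map_mul, map_mul, gHom_u, gHom_w]
      exact sp_comm n _ _ (by simp only [Fin.val_mk]; omega)
  | comm_uz i h =>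
      simp [map_mul, gHom_z]
  | comm_zw =>
      simp [map_mul, gHom_z]
  | serre_u1w i h =>
      rw [map_cmt, map_cmt, map_cmt, gHom_u, gHom_w, map_zero, cmt4, sub_eq_zero]
      exact sp_serre10 n _ _ rfl (by simp [h])
  | serre_u2z i h =>
      simp [cmt, map_sub, map_mul, map_smul, gHom_z]
  | rel_wwu i h =>
      rw [map_cmt, map_cmt, gHom_w, gHom_u, cmt3b, map_neg, map_smul, map_mul, gHom_z,
        mul_zero, smul_zero, neg_zero, sub_eq_zero]
      exact sp_serre01 n _ _ rfl (by simp [h])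
  | rel_zw i j hi hj =>
      simp [cmt, map_sub, map_mul, map_smul, gHom_z]
  | rel_zz i j hi hj =>
      simp [cmt, map_sub, map_mul, map_smul, map_add, gHom_z]

/-- **The homomorphism `μ : 𝒰⁺_{q,n} ↠ U_q^+(sp_{2n})`** (Theorem on the folding
`(so_{2n+2}, sp_{2n})`): the assignment `u_i ↦ E_i`, `w ↦ E₀`, `z ↦ 0` extends to a surjective
algebra homomorphism. -/
theorem uqn_to_sp_homomorphism (n : ℕ) (hn : 3 ≤ n) :
    ∃ f : UqnPlus n →ₐ[Kq] UqSP n,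
      (∀ i : Fin (n - 1),
        f (RingQuot.mkAlgHom Kq (URel n) (fu n i))
          = mEsp n ⟨(i : ℕ) + 1, by have := i.isLt; omega⟩) ∧
      f (RingQuot.mkAlgHom Kq (URel n) (fw n)) = mEsp n ⟨0, by omega⟩ ∧
      f (RingQuot.mkAlgHom Kq (URel n) (fz n)) = 0 ∧
      Function.Surjective f := by
  refine ⟨RingQuot.liftAlgHom Kq ⟨gHom n hn, gHom_rel n hn⟩, ?_, ?_, ?_, ?_⟩
  · intro i
    rw [RingQuot.liftAlgHom_mkAlgHom_apply, gHom_u]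
  · rw [RingQuot.liftAlgHom_mkAlgHom_apply, gHom_w]
  · rw [RingQuot.liftAlgHom_mkAlgHom_apply, gHom_z]
  · intro x
    obtain ⟨y, rfl⟩ := RingQuot.mkAlgHom_surjective Kq (SPRel n) x
    induction y using FreeAlgebra.induction with
    | grade0 r => exact ⟨algebraMap Kq _ r, by simp⟩
    | grade1 i =>
        by_cases h : (i : ℕ) = 0
        · refine ⟨RingQuot.mkAlgHom Kq (URel n) (fw n), ?_⟩
          rw [RingQuot.liftAlgHom_mkAlgHom_apply, gHom_w]
          show mEsp n _ = mEsp n i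
          congr 1
          exact Fin.ext h.symm
        · refine ⟨RingQuot.mkAlgHom Kq (URel n)
            (fu n ⟨(i : ℕ) - 1, by have := i.isLt; omega⟩), ?_⟩
          rw [RingQuot.liftAlgHom_mkAlgHom_apply, gHom_u]
          show mEsp n _ = mEsp n i
          congr 1
          exact Fin.ext (by simp; omega)
    | mul a b ha hb =>
        obtain ⟨x, hx⟩ := ha
        obtain ⟨y, hy⟩ := hb
        exact ⟨x * y, by rw [map_mul, map_mul, hx, hy]⟩
    | add a b ha hb =>
        obtain ⟨x, hx⟩ := ha
        obtain ⟨y, hy⟩ := hb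
        exact ⟨x + y, by rw [map_add, map_add, hx, hy]⟩

end
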